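/- For any path P in a graph G, the set S of all ending vertices for P is a connected set of ending vertices; moreover, for every integer t with 1 ≤ t ≤ |S| there exists a connected set of ending vertices for P of size exactly t. -/

import Mathlib

open SimpleGraph

/-- `Q` is a rotation of `P`: if `P = p₀ … x … p_t` (with endpoint `b = p_t`) and `x b` is an
edge, the rotation is `p₀ … x b p_{t-1} … `, obtained by reversing the segment after `x` and
appending it after the new edge `x b`.  This is captured by the relation between the vertex
sequences (supports) of the two walks. -/
def IsRotation {V : Type*} {G : SimpleGraph V} {a b c : V}
    (P : G.Walk a b) (Q : G.Walk a c) : Prop :=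
  ∃ (l1 l2 : List V) (x : V),
    P.support = l1 ++ x :: (l2 ++ [b]) ∧ Q.support = l1 ++ x :: b :: l2.reverse

/-- `Q` is derived from `P`: obtained from `P` by a finite sequence of rotations. -/
def IsDerived {V : Type*} {G : SimpleGraph V} {a b c : V}
    (P : G.Walk a b) (Q : G.Walk a c) : Prop :=
  Relation.ReflTransGen (fun R S : (Σ v : V, G.Walk a v) => IsRotation R.2 S.2) ⟨b, P⟩ ⟨c, Q⟩

/-- `x` is an ending vertex for `P`: some path derived from `P` ends at `x`. -/
def IsEndingVertex {V : Type*} {G : SimpleGraph V} {a b : V}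
    (P : G.Walk a b) (x : V) : Prop :=
  ∃ Q : G.Walk a x, IsDerived P Q

/-- `X` is a connected set of ending vertices for `P`: for every `x ∈ X` there is a walk
ending at `x` derived from `P` by a sequence of rotations all of whose intermediate
walks end at vertices of `X`. -/
def IsConnectedEndingSet {V : Type*} {G : SimpleGraph V} {a b : V}
    (P : G.Walk a b) (X : Set V) : Prop :=
  ∀ x ∈ X, ∃ Q : G.Walk a x,
    Relation.ReflTransGen
      (fun R S : (Σ v : V, G.Walk a v) => IsRotation R.2 S.2 ∧ S.1 ∈ X) ⟨b, P⟩ ⟨x, Q⟩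

/-- `N_G(S)`: the set of vertices outside `S` having a neighbour in `S`. -/
def setNbhd {V : Type*} (G : SimpleGraph V) (S : Set V) : Set V :=
  {v | v ∉ S ∧ ∃ s ∈ S, G.Adj v s}

section Aux

variable {V : Type*} {G : SimpleGraph V} {a b : V}

private lemma chain_mono {X Y : Set V} (hXY : X ⊆ Y) {s t : (Σ v : V, G.Walk a v)}
    (h : Relation.ReflTransGen
      (fun R S : (Σ v : V, G.Walk a v) => IsRotation R.2 S.2 ∧ S.1 ∈ X) s t) :
    Relation.ReflTransGen
      (fun R S : (Σ v : V, G.Walk a v) => IsRotation R.2 S.2 ∧ S.1 ∈ Y) s t :=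
  Relation.ReflTransGen.mono (fun _ _ hh => ⟨hh.1, hXY hh.2⟩) _ _ h

private lemma exit_lemma {P : G.Walk a b} {X : Set V} (hb : b ∈ X)
    {s : Σ v : V, G.Walk a v}
    (h : Relation.ReflTransGen
      (fun R S : (Σ v : V, G.Walk a v) => IsRotation R.2 S.2) ⟨b, P⟩ s) :
    (s.1 ∈ X ∧ Relation.ReflTransGen
        (fun R S : (Σ v : V, G.Walk a v) => IsRotation R.2 S.2 ∧ S.1 ∈ X) ⟨b, P⟩ s)
    ∨ ∃ z, z ∉ X ∧ ∃ Qz : G.Walk a z, IsDerived P Qz ∧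
        Relation.ReflTransGen
          (fun R S : (Σ v : V, G.Walk a v) => IsRotation R.2 S.2 ∧ S.1 ∈ X ∪ {z})
          ⟨b, P⟩ ⟨z, Qz⟩ := by
  induction h with
  | refl => exact Or.inl ⟨hb, Relation.ReflTransGen.refl⟩
  | tail hpref hstep ih =>
    rename_i mid last
    rcases ih with ⟨hmem, chain⟩ | hr
    · by_cases hl : last.1 ∈ X
      · exact Or.inl ⟨hl, chain.tail ⟨hstep, hl⟩⟩
      · refine Or.inr ⟨last.1, hl, last.2, ?_, ?_⟩
        · show Relation.ReflTransGen _ _ (⟨last.1, last.2⟩ : Σ v : V, G.Walk a v)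
          rw [Sigma.eta]
          exact hpref.tail hstep
        · have : Relation.ReflTransGen
              (fun R S : (Σ v : V, G.Walk a v) => IsRotation R.2 S.2 ∧ S.1 ∈ X ∪ {last.1})
              ⟨b, P⟩ last :=
            (chain_mono Set.subset_union_left chain).tail
              ⟨hstep, Set.mem_union_right _ rfl⟩
          rw [← Sigma.eta last] at this
          exact this
    · exact Or.inr hr

end Aux

/-- For any path `P` in a graph `G`, the set `S` of all ending vertices for `P` is a
connected set of ending vertices; moreover for every `t` with `1 ≤ t ≤ |S|` there is a
connected set of ending vertices for `P` of size exactly `t`. -/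
theorem stmt12 {V : Type*} [Fintype V] {G : SimpleGraph V} {p₀ b : V}
    (P : G.Walk p₀ b) (hP : P.IsPath) :
    IsConnectedEndingSet P {x : V | IsEndingVertex P x} ∧
    ∀ t : ℕ, 1 ≤ t → t ≤ {x : V | IsEndingVertex P x}.ncard →
      ∃ X : Set V, IsConnectedEndingSet P X ∧ X.ncard = t := by

  have hS : ∀ x, IsEndingVertex P x ↔ x ∈ {x : V | IsEndingVertex P x} := fun x => Iff.rfl
  set S : Set V := {x : V | IsEndingVertex P x} with hSdef
  constructor
  · intro x hx
    obtain ⟨Q, hQ⟩ := hx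
    refine ⟨Q, ?_⟩
    have : ∀ s : (Σ v : V, G.Walk p₀ v),
        Relation.ReflTransGen
          (fun R T : (Σ v : V, G.Walk p₀ v) => IsRotation R.2 T.2) ⟨b, P⟩ s →
        Relation.ReflTransGen
          (fun R T : (Σ v : V, G.Walk p₀ v) => IsRotation R.2 T.2 ∧ T.1 ∈ S) ⟨b, P⟩ s := by
      intro s h
      induction h with
      | refl => exact Relation.ReflTransGen.refl
      | tail hpref hstep ih =>
        rename_i mid last
        refine ih.tail ⟨hstep, ?_⟩
        refine ⟨last.2, ?_⟩
        show Relation.ReflTransGen _ _ (⟨last.1, last.2⟩ : Σ v : V, G.Walk p₀ v)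
        rw [Sigma.eta]
        exact hpref.tail hstep
    exact this ⟨x, Q⟩ hQ
  · have hfin : S.Finite := Set.toFinite S
    have key : ∀ t : ℕ, 1 ≤ t → t ≤ S.ncard →
        ∃ X : Set V, X ⊆ S ∧ b ∈ X ∧ IsConnectedEndingSet P X ∧ X.ncard = t := by
      intro t ht
      induction t, ht using Nat.le_induction with
      | base =>
        intro _
        refine ⟨{b}, ?_, rfl, ?_, Set.ncard_singleton b⟩
        · intro x hx
          rcases hx with rfl
          exact ⟨P, Relation.ReflTransGen.refl⟩
        · intro x hx
          rcases hx with rfl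
          exact ⟨P, Relation.ReflTransGen.refl⟩
      | succ t ht ih =>
        intro hle
        obtain ⟨X, hXS, hbX, hconn, hcard⟩ := ih (le_trans (Nat.le_succ t) hle)
        have hne : X ≠ S := by
          intro h
          rw [h] at hcard
          omega
        have hss : X ⊂ S := ⟨hXS, fun h => hne (Set.Subset.antisymm hXS h)⟩
        obtain ⟨y, hyS, hyX⟩ := Set.exists_of_ssubset hss
        obtain ⟨Qy, hQy⟩ := hyS
        rcases exit_lemma hbX (s := ⟨y, Qy⟩) hQy with ⟨hmem, _⟩ | ⟨z, hzX, Qz, hder, hchain⟩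
        · exact absurd hmem hyX
        · refine ⟨X ∪ {z}, ?_, Or.inl hbX, ?_, ?_⟩
          · intro w hw
            rcases hw with hw | hw
            · exact hXS hw
            · rcases hw with rfl
              exact ⟨Qz, hder⟩
          · intro x hx
            rcases hx with hx | hx
            · obtain ⟨Q, hQ⟩ := hconn x hx
              exact ⟨Q, chain_mono Set.subset_union_left hQ⟩
            · rcases hx with rfl
              exact ⟨Qz, hchain⟩
          · rw [Set.union_singleton, Set.ncard_insert_of_notMem hzX (hfin.subset hXS)]
            omega
    intro t ht hle
    obtain ⟨X, _, _, hconn, hcard⟩ := key t ht hle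
    exact ⟨X, hconn, hcard⟩
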